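/- Let V be a finite set, let μ be a fully supported probability measure on Ω = {−1,+1}^V, and let c : V × Ω → (0,∞) be flipping rates satisfying the reversibility condition c(x,σ) μ(σ) = c(x,σˣ) μ(σˣ) for all x, σ, and the bounds 0 < c_m ≤ c(x,σ) ≤ c_M. Then for every F : Ω → ℝ and every x ∈ V, the covariance admits the integral representation cov_μ(F, σ_x) = −∫₀^∞ E_μ[ σ_x · c(x,·) · (∇_x P_t F) ] dt, where P_t = exp(t𝓛) is the Glauber semigroup, (∇_x P_t F)(σ) = (P_t F)(σˣ) − (P_t F)(σ), and σ_x denotes the spin function σ ↦ σ(x); in particular the integral converges absolutely. -/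

import Mathlib

open Finset

/-- Flip the spin of `σ` at site `x`. -/
def flipC {V : Type*} [DecidableEq V] (σ : V → Bool) (x : V) : V → Bool :=
  Function.update σ x (!σ x)

/-- The ±1 spin value of `σ` at site `x`. -/
def spinC {V : Type*} (σ : V → Bool) (x : V) : ℝ := if σ x then 1 else -1

/-- Expectation of `F` under the (discrete, not necessarily normalized) measure `μ`. -/
def Emean {V : Type*} [Fintype V] [DecidableEq V] (μ F : (V → Bool) → ℝ) : ℝ :=
  ∑ σ, μ σ * F σ

/-- The Glauber generator with flipping rates `c`. -/
def gen {V : Type*} [Fintype V] [DecidableEq V] (c : V → (V → Bool) → ℝ)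
    (F : (V → Bool) → ℝ) : (V → Bool) → ℝ :=
  fun σ => ∑ x, c x σ * (F (flipC σ x) - F σ)

/-- The Dirichlet form `D(F) = -E_μ[F ⬝ 𝓛F]`. -/
def dirichlet {V : Type*} [Fintype V] [DecidableEq V] (μ : (V → Bool) → ℝ)
    (c : V → (V → Bool) → ℝ) (F : (V → Bool) → ℝ) : ℝ :=
  - Emean μ (fun σ => F σ * gen c F σ)

/-- Entropy `Ent_μ(F) = E_μ[F log F] − E_μ[F] log E_μ[F]` (note `0 log 0 = 0` in Lean). -/
noncomputable def entropy {V : Type*} [Fintype V] [DecidableEq V] (μ F : (V → Bool) → ℝ) : ℝ :=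
  Emean μ (fun σ => F σ * Real.log (F σ)) - Emean μ F * Real.log (Emean μ F)

/-- Covariance under `μ`. -/
def covar {V : Type*} [Fintype V] [DecidableEq V] (μ F G : (V → Bool) → ℝ) : ℝ :=
  Emean μ (fun σ => F σ * G σ) - Emean μ F * Emean μ G

/-- Variance under `μ`. -/
def varM {V : Type*} [Fintype V] [DecidableEq V] (μ F : (V → Bool) → ℝ) : ℝ :=
  covar μ F F

/-- The Glauber generator as a linear map. -/
def genL {V : Type*} [Fintype V] [DecidableEq V] (c : V → (V → Bool) → ℝ) :
    ((V → Bool) → ℝ) →ₗ[ℝ] ((V → Bool) → ℝ) where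
  toFun := gen c
  map_add' F G := by
    funext σ
    simp only [gen, Pi.add_apply, ← Finset.sum_add_distrib]
    exact Finset.sum_congr rfl fun x _ => by ring
  map_smul' a F := by
    funext σ
    simp only [gen, Pi.smul_apply, smul_eq_mul, RingHom.id_apply, Finset.mul_sum]
    exact Finset.sum_congr rfl fun x _ => by ring

/-- The Glauber generator as a continuous linear map. -/
noncomputable def genCLM {V : Type*} [Fintype V] [DecidableEq V] (c : V → (V → Bool) → ℝ) :
    ((V → Bool) → ℝ) →L[ℝ] ((V → Bool) → ℝ) :=
  LinearMap.toContinuousLinearMap (genL c)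

/-- The Glauber semigroup `P_t = exp (t 𝓛)`. -/
noncomputable def heatSG {V : Type*} [Fintype V] [DecidableEq V] (c : V → (V → Bool) → ℝ)
    (t : ℝ) : ((V → Bool) → ℝ) →L[ℝ] ((V → Bool) → ℝ) :=
  NormedSpace.exp (t • genCLM c)

open MeasureTheory

section AuxGlauber
variable {V : Type*} [Fintype V] [DecidableEq V]
set_option linter.unusedSectionVars false

lemma flipC_invol (x : V) : Function.Involutive (fun σ : V → Bool => flipC σ x) := by
  intro σ; funext y
  by_cases h : y = x
  · subst h; simp [flipC, Function.update]
  · simp [flipC, Function.update, h]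

lemma sum_flip (x : V) (Φ : (V → Bool) → ℝ) :
    ∑ σ, Φ (flipC σ x) = ∑ σ, Φ σ :=
  Equiv.sum_comp ((flipC_invol x).toPerm) Φ

lemma flipC_self (σ : V → Bool) (x : V) : flipC σ x x = !σ x := by simp [flipC]

lemma flipC_ne (σ : V → Bool) {x y : V} (h : y ≠ x) : flipC σ x y = σ y := by
  simp [flipC, Function.update, h]

lemma spin_flip_self (σ : V → Bool) (x : V) : spinC (flipC σ x) x = -spinC σ x := by
  simp only [spinC, flipC_self]; cases σ x <;> simp

lemma spin_flip_ne (σ : V → Bool) {x y : V} (h : x ≠ y) : spinC (flipC σ y) x = spinC σ x := by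
  simp only [spinC, flipC_ne σ h]

lemma abs_spin (σ : V → Bool) (x : V) : |spinC σ x| = 1 := by
  unfold spinC; split <;> norm_num

section rev
variable (μ : (V → Bool) → ℝ) (c : V → (V → Bool) → ℝ)
variable (hrev : ∀ (x : V) σ, c x σ * μ σ = c x (flipC σ x) * μ (flipC σ x))
include hrev

lemma T_eq (y x : V) (H : (V → Bool) → ℝ) :
    ∑ σ, μ σ * spinC σ x * c y σ * (H (flipC σ y) - H σ)
      = ∑ σ, μ σ * c y σ * (spinC (flipC σ y) x - spinC σ x) * H σ := by
  have h1 : ∑ σ, μ σ * spinC σ x * c y σ * H (flipC σ y)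
      = ∑ σ, μ σ * c y σ * spinC (flipC σ y) x * H σ := by
    rw [← sum_flip y (fun σ => μ σ * spinC σ x * c y σ * H (flipC σ y))]
    refine Finset.sum_congr rfl fun σ _ => ?_
    have hi : flipC (flipC σ y) y = σ := flipC_invol y σ
    simp only [hi]
    linear_combination (-(spinC (flipC σ y) x * H σ)) * (hrev y σ)
  calc ∑ σ, μ σ * spinC σ x * c y σ * (H (flipC σ y) - H σ)
      = (∑ σ, μ σ * spinC σ x * c y σ * H (flipC σ y))
        - ∑ σ, μ σ * spinC σ x * c y σ * H σ := by
        rw [← Finset.sum_sub_distrib]; exact Finset.sum_congr rfl fun σ _ => by ring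
    _ = _ := by
        rw [h1, ← Finset.sum_sub_distrib]
        exact Finset.sum_congr rfl fun σ _ => by ring

lemma key_id (x : V) (H : (V → Bool) → ℝ) :
    Emean μ (fun σ => spinC σ x * gen c H σ)
      = Emean μ (fun σ => spinC σ x * c x σ * (H (flipC σ x) - H σ)) := by
  have hL : Emean μ (fun σ => spinC σ x * gen c H σ)
      = ∑ y, ∑ σ, μ σ * spinC σ x * c y σ * (H (flipC σ y) - H σ) := by
    rw [Finset.sum_comm]
    refine Finset.sum_congr rfl fun σ _ => ?_
    simp only [gen, Finset.mul_sum]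
    exact Finset.sum_congr rfl fun y _ => by ring
  rw [hL]
  rw [Finset.sum_eq_single x]
  · unfold Emean
    exact Finset.sum_congr rfl fun σ _ => by ring
  · intro y _ hyx
    rw [T_eq μ c hrev y x H]
    apply Finset.sum_eq_zero; intro σ _
    rw [spin_flip_ne σ (Ne.symm hyx)]; ring
  · intro h; exact absurd (Finset.mem_univ x) h

lemma mass (H : (V → Bool) → ℝ) : Emean μ (gen c H) = 0 := by
  have hL : Emean μ (gen c H) = ∑ y, ∑ σ, μ σ * c y σ * (H (flipC σ y) - H σ) := by
    rw [Finset.sum_comm]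
    refine Finset.sum_congr rfl fun σ _ => ?_
    simp only [gen, Finset.mul_sum]
    exact Finset.sum_congr rfl fun y _ => by ring
  rw [hL]
  apply Finset.sum_eq_zero; intro y _
  have h1 : ∑ σ, μ σ * c y σ * H (flipC σ y) = ∑ σ, μ σ * c y σ * H σ := by
    rw [← sum_flip y (fun σ => μ σ * c y σ * H (flipC σ y))]
    refine Finset.sum_congr rfl fun σ _ => ?_
    have hi : flipC (flipC σ y) y = σ := flipC_invol y σ
    simp only [hi]
    linear_combination (-(H σ)) * (hrev y σ)
  calc ∑ σ, μ σ * c y σ * (H (flipC σ y) - H σ)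
      = (∑ σ, μ σ * c y σ * H (flipC σ y)) - ∑ σ, μ σ * c y σ * H σ := by
        rw [← Finset.sum_sub_distrib]; exact Finset.sum_congr rfl fun σ _ => by ring
    _ = 0 := by rw [h1, sub_self]

lemma dsym (G : (V → Bool) → ℝ) :
    Emean μ (fun σ => G σ * gen c G σ)
      = -(1/2) * ∑ y, ∑ σ, μ σ * c y σ * (G (flipC σ y) - G σ)^2 := by
  have hL : Emean μ (fun σ => G σ * gen c G σ)
      = ∑ y, ∑ σ, μ σ * c y σ * G σ * (G (flipC σ y) - G σ) := by
    rw [Finset.sum_comm]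
    refine Finset.sum_congr rfl fun σ _ => ?_
    simp only [gen, Finset.mul_sum]
    exact Finset.sum_congr rfl fun y _ => by ring
  rw [hL, Finset.mul_sum]
  refine Finset.sum_congr rfl fun y _ => ?_
  have h1 : ∑ σ, μ σ * c y σ * G σ * (G (flipC σ y) - G σ)
      = ∑ σ, μ σ * c y σ * G (flipC σ y) * (G σ - G (flipC σ y)) := by
    rw [← sum_flip y (fun σ => μ σ * c y σ * G σ * (G (flipC σ y) - G σ))]
    refine Finset.sum_congr rfl fun σ _ => ?_
    have hi : flipC (flipC σ y) y = σ := flipC_invol y σ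
    simp only [hi]
    linear_combination (-(G (flipC σ y) * (G σ - G (flipC σ y)))) * (hrev y σ)
  have h2 : ∑ σ, (μ σ * c y σ * G σ * (G (flipC σ y) - G σ)
        + μ σ * c y σ * G (flipC σ y) * (G σ - G (flipC σ y)))
      = ∑ σ, -(μ σ * c y σ * (G (flipC σ y) - G σ)^2) :=
    Finset.sum_congr rfl fun σ _ => by ring
  rw [Finset.sum_add_distrib] at h2
  rw [Finset.sum_neg_distrib] at h2
  linarith
end rev

lemma const_of_flip (G : (V → Bool) → ℝ) (h : ∀ σ y, G (flipC σ y) = G σ)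
    (σ τ : V → Bool) : G σ = G τ := by
  have key : ∀ s : Finset V, G (fun v => if v ∈ s then τ v else σ v) = G σ := by
    intro s
    induction s using Finset.induction_on with
    | empty => simp
    | @insert a s ha IH =>
      by_cases hab : σ a = τ a
      · have : (fun v => if v ∈ insert a s then τ v else σ v)
            = (fun v => if v ∈ s then τ v else σ v) := by
          funext v
          by_cases hv : v = a
          · subst hv; simp [ha, ← hab]
          · simp [Finset.mem_insert, hv]
        rw [this, IH]
      · have : (fun v => if v ∈ insert a s then τ v else σ v)
            = flipC (fun v => if v ∈ s then τ v else σ v) a := by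
          funext v
          by_cases hv : v = a
          · subst hv
            simp only [Finset.mem_insert, true_or, if_pos, flipC, Function.update_self, ha,
              if_neg ha]
            cases hσ : σ v <;> cases hτ : τ v <;> simp_all
          · simp [flipC, Function.update, hv, Finset.mem_insert]
        rw [this, h, IH]
  have := key Finset.univ
  simp only [Finset.mem_univ, if_true] at this
  exact this.symm

lemma gap (μ : (V → Bool) → ℝ) (c : V → (V → Bool) → ℝ)
    (hμpos : ∀ σ, 0 < μ σ) (hμ1 : ∑ σ, μ σ = 1) (hcpos : ∀ x σ, 0 < c x σ) :
    ∃ L, 0 < L ∧ ∀ G : (V → Bool) → ℝ, Emean μ G = 0 →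
      L * Emean μ (fun σ => G σ * G σ)
        ≤ (1/2) * ∑ y, ∑ σ, μ σ * c y σ * (G (flipC σ y) - G σ)^2 := by
  classical
  set Q : ((V → Bool) → ℝ) → ℝ :=
    fun G => ∑ y, ∑ σ, μ σ * c y σ * (G (flipC σ y) - G σ)^2 with hQ
  have hQnonneg : ∀ G, 0 ≤ Q G := fun G =>
    Finset.sum_nonneg fun y _ => Finset.sum_nonneg fun σ _ =>
      mul_nonneg (mul_nonneg (hμpos σ).le (hcpos y σ).le) (sq_nonneg _)
  have hQsmul : ∀ (a : ℝ) (G : (V → Bool) → ℝ), Q (fun σ => a * G σ) = a^2 * Q G := by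
    intro a G
    simp only [hQ, Finset.mul_sum]
    exact Finset.sum_congr rfl fun y _ => Finset.sum_congr rfl fun σ _ => by ring
  have hEsmul : ∀ (a : ℝ) (G : (V → Bool) → ℝ),
      Emean μ (fun σ => a * G σ) = a * Emean μ G := by
    intro a G
    simp only [Emean, Finset.mul_sum]
    exact Finset.sum_congr rfl fun σ _ => by ring
  have hn2smul : ∀ (a : ℝ) (G : (V → Bool) → ℝ),
      Emean μ (fun σ => (a * G σ) * (a * G σ)) = a^2 * Emean μ (fun σ => G σ * G σ) := by
    intro a G
    simp only [Emean, Finset.mul_sum]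
    exact Finset.sum_congr rfl fun σ _ => by ring
  have hn2nonneg : ∀ G : (V → Bool) → ℝ, 0 ≤ Emean μ (fun σ => G σ * G σ) := fun G =>
    Finset.sum_nonneg fun σ _ => mul_nonneg (hμpos σ).le (mul_self_nonneg _)
  by_cases hS : ∃ G : (V → Bool) → ℝ, Emean μ G = 0 ∧ Emean μ (fun σ => G σ * G σ) = 1
  · set S : Set ((V → Bool) → ℝ) :=
      {G | Emean μ G = 0 ∧ Emean μ (fun σ => G σ * G σ) = 1} with hSdef
    have hEcont : Continuous fun G : (V → Bool) → ℝ => Emean μ G := by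
      unfold Emean
      exact continuous_finset_sum _ fun σ _ => continuous_const.mul (continuous_apply σ)
    have hn2cont : Continuous fun G : (V → Bool) → ℝ => Emean μ (fun σ => G σ * G σ) := by
      unfold Emean
      exact continuous_finset_sum _ fun σ _ =>
        continuous_const.mul ((continuous_apply σ).mul (continuous_apply σ))
    have hQcont : Continuous Q := by
      rw [hQ]
      exact continuous_finset_sum _ fun y _ => continuous_finset_sum _ fun σ _ =>
        continuous_const.mul (((continuous_apply (flipC σ y)).sub (continuous_apply σ)).pow 2)
    have hclosed : IsClosed S :=
      (isClosed_eq hEcont continuous_const).inter (isClosed_eq hn2cont continuous_const)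
    obtain ⟨σ₀, -, hσ₀⟩ := Finset.exists_min_image Finset.univ μ Finset.univ_nonempty
    have hm : 0 < μ σ₀ := hμpos σ₀
    have hbdd : Bornology.IsBounded S := by
      apply Bornology.IsBounded.subset (Metric.isBounded_closedBall
        (x := (0 : (V → Bool) → ℝ)) (r := Real.sqrt (μ σ₀)⁻¹))
      intro G hG
      rw [Metric.mem_closedBall, dist_zero_right]
      rw [pi_norm_le_iff_of_nonneg (Real.sqrt_nonneg _)]
      intro σ
      have h1 : μ σ * (G σ * G σ) ≤ 1 := by
        rw [← hG.2]
        exact Finset.single_le_sum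
          (fun τ _ => mul_nonneg (hμpos τ).le (mul_self_nonneg _)) (Finset.mem_univ σ)
      have h0 : G σ ^ 2 * μ σ₀ ≤ 1 := by
        nlinarith [hσ₀ σ (Finset.mem_univ σ), sq_nonneg (G σ)]
      have h2 : G σ ^ 2 ≤ (μ σ₀)⁻¹ := by
        rw [inv_eq_one_div, le_div_iff₀ hm]; exact h0
      calc ‖G σ‖ = Real.sqrt (G σ ^ 2) := by
            rw [Real.sqrt_sq_eq_abs, Real.norm_eq_abs]
        _ ≤ Real.sqrt (μ σ₀)⁻¹ := Real.sqrt_le_sqrt h2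
    have hcompact : IsCompact S := Metric.isCompact_of_isClosed_isBounded hclosed hbdd
    obtain ⟨G₀, hG₀S, hmin'⟩ := hcompact.exists_isMinOn hS hQcont.continuousOn
    have hmin : ∀ G ∈ S, Q G₀ ≤ Q G := fun G hG => hmin' hG
    have hQG₀pos : 0 < Q G₀ := by
      rcases lt_or_eq_of_le (hQnonneg G₀) with h | h
      · exact h
      · exfalso
        have hflip : ∀ σ y, G₀ (flipC σ y) = G₀ σ := by
          intro σ y
          have hterm : μ σ * c y σ * (G₀ (flipC σ y) - G₀ σ)^2 = 0 := by
            have hyz : ∑ σ, μ σ * c y σ * (G₀ (flipC σ y) - G₀ σ)^2 = 0 := by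
              have := (Finset.sum_eq_zero_iff_of_nonneg (fun y _ =>
                Finset.sum_nonneg fun σ _ => mul_nonneg
                  (mul_nonneg (hμpos σ).le (hcpos y σ).le) (sq_nonneg _))).mp h.symm
              exact this y (Finset.mem_univ y)
            exact (Finset.sum_eq_zero_iff_of_nonneg (fun σ _ => mul_nonneg
              (mul_nonneg (hμpos σ).le (hcpos y σ).le) (sq_nonneg _))).mp hyz σ
              (Finset.mem_univ σ)
          have hpos : 0 < μ σ * c y σ := mul_pos (hμpos σ) (hcpos y σ)
          have hsq : (G₀ (flipC σ y) - G₀ σ)^2 = 0 := by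
            rcases mul_eq_zero.mp hterm with h' | h'
            · exact absurd h' hpos.ne'
            · exact h'
          have := pow_eq_zero_iff (n := 2) (by norm_num) |>.mp hsq
          linarith [sub_eq_zero.mp this]
        have hconst := const_of_flip G₀ hflip
        have hzero : ∀ σ, G₀ σ = 0 := by
          intro σ
          have hE : Emean μ G₀ = G₀ σ := by
            unfold Emean
            calc ∑ τ, μ τ * G₀ τ = ∑ τ, μ τ * G₀ σ :=
                  Finset.sum_congr rfl fun τ _ => by rw [hconst τ σ]
              _ = G₀ σ := by rw [← Finset.sum_mul, hμ1, one_mul]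
          rw [hG₀S.1] at hE; exact hE.symm
        have : Emean μ (fun σ => G₀ σ * G₀ σ) = 0 := by
          unfold Emean
          exact Finset.sum_eq_zero fun σ _ => by simp [hzero σ]
        rw [hG₀S.2] at this; norm_num at this
    refine ⟨Q G₀ / 2, by linarith, ?_⟩
    intro G hG
    by_cases hn : Emean μ (fun σ => G σ * G σ) = 0
    · rw [hn, mul_zero]
      exact mul_nonneg (by norm_num) (hQnonneg G)
    · have hnpos : 0 < Emean μ (fun σ => G σ * G σ) := (hn2nonneg G).lt_of_ne' hn
      set r := Real.sqrt (Emean μ (fun σ => G σ * G σ)) with hr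
      have hrpos : 0 < r := Real.sqrt_pos.mpr hnpos
      have hr2 : r^2 = Emean μ (fun σ => G σ * G σ) := Real.sq_sqrt hnpos.le
      have hGS : (fun σ => r⁻¹ * G σ) ∈ S := by
        constructor
        · rw [hEsmul, hG, mul_zero]
        · rw [hn2smul, ← hr2]
          field_simp
      have := hmin _ hGS
      rw [hQsmul] at this
      have hr2' : (r⁻¹)^2 = (r^2)⁻¹ := by rw [inv_pow]
      rw [hr2', hr2] at this
      have h4 := mul_le_mul_of_nonneg_left this hnpos.le
      rw [← mul_assoc, mul_inv_cancel₀ hn, one_mul] at h4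
      linarith
  · refine ⟨1, one_pos, ?_⟩
    intro G hG
    have hn : Emean μ (fun σ => G σ * G σ) = 0 := by
      by_contra hne
      have hnpos : 0 < Emean μ (fun σ => G σ * G σ) := (hn2nonneg G).lt_of_ne' hne
      set r := Real.sqrt (Emean μ (fun σ => G σ * G σ)) with hr
      have hrpos : 0 < r := Real.sqrt_pos.mpr hnpos
      have hr2 : r^2 = Emean μ (fun σ => G σ * G σ) := Real.sq_sqrt hnpos.le
      exact hS ⟨fun σ => r⁻¹ * G σ, by rw [hEsmul, hG, mul_zero], by
        rw [hn2smul, ← hr2]; field_simp⟩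
    rw [hn, mul_zero]
    exact mul_nonneg (by norm_num) (hQnonneg G)

lemma genCLM_apply (c : V → (V → Bool) → ℝ) (H : (V → Bool) → ℝ) :
    genCLM c H = gen c H := rfl

lemma heat_zero (c : V → (V → Bool) → ℝ) (G : (V → Bool) → ℝ) : heatSG c 0 G = G := by
  simp [heatSG, NormedSpace.exp_zero]

lemma hasDerivAt_heat (c : V → (V → Bool) → ℝ) (G : (V → Bool) → ℝ) (σ : V → Bool) (t : ℝ) :
    HasDerivAt (fun u => heatSG c u G σ) (gen c (heatSG c t G) σ) t := by
  have h := hasDerivAt_exp_smul_const' (𝕂 := ℝ) (genCLM c) t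
  set L : (((V → Bool) → ℝ) →L[ℝ] ((V → Bool) → ℝ)) →L[ℝ] ℝ :=
    (ContinuousLinearMap.proj σ).comp (ContinuousLinearMap.apply ℝ ((V → Bool) → ℝ) G) with hL
  have h2 := L.hasFDerivAt.comp_hasDerivAt t h
  exact h2

lemma exp_fixes {A : ((V → Bool) → ℝ) →L[ℝ] ((V → Bool) → ℝ)} (v : (V → Bool) → ℝ)
    (h : A v = 0) : NormedSpace.exp A v = v := by
  have hsum : Summable fun n : ℕ => ((Nat.factorial n : ℝ)⁻¹) • A ^ n :=
    NormedSpace.expSeries_summable' A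
  have happ : NormedSpace.exp A v
      = ∑' n : ℕ, (((Nat.factorial n : ℝ)⁻¹) • A ^ n) v := by
    rw [NormedSpace.exp_eq_tsum (𝕂 := ℝ)]
    exact ContinuousLinearMap.map_tsum (ContinuousLinearMap.apply ℝ ((V → Bool) → ℝ) v) hsum
  rw [happ]
  have hzero : ∀ n : ℕ, n ≠ 0 → (((Nat.factorial n : ℝ)⁻¹) • A ^ n) v = 0 := by
    intro n hn
    obtain ⟨m, rfl⟩ := Nat.exists_eq_succ_of_ne_zero hn
    have : (A ^ (m + 1)) v = 0 := by
      rw [pow_succ, ContinuousLinearMap.mul_apply, h, map_zero]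
    simp [ContinuousLinearMap.smul_apply, this]
  rw [tsum_eq_single 0 hzero]
  simp

lemma heat_const (c : V → (V → Bool) → ℝ) (k t : ℝ) :
    heatSG c t (fun _ => k) = fun _ => k := by
  apply exp_fixes
  have hz : genCLM c (fun _ => k) = 0 := by
    funext σ
    show gen c (fun _ => k) σ = 0
    simp [gen]
  rw [ContinuousLinearMap.smul_apply, hz, smul_zero]

end AuxGlauber



/-- Integral representation of the covariance along the Glauber semigroup:
`cov_μ(F, σ_x) = −∫₀^∞ E_μ[σ_x ⋅ c(x,·) ⋅ ∇ₓ P_t F] dt`, the integral converging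
absolutely. -/
theorem covariance_integral_representation
    {V : Type*} [Fintype V] [DecidableEq V]
    (μ : (V → Bool) → ℝ) (hμpos : ∀ σ, 0 < μ σ) (hμ1 : ∑ σ, μ σ = 1)
    (c : V → (V → Bool) → ℝ) (hcpos : ∀ x σ, 0 < c x σ)
    (cm cM : ℝ) (hcm : 0 < cm) (hbd : ∀ x σ, cm ≤ c x σ ∧ c x σ ≤ cM)
    (hrev : ∀ x σ, c x σ * μ σ = c x (flipC σ x) * μ (flipC σ x))
    (F : (V → Bool) → ℝ) (x : V) :
    MeasureTheory.IntegrableOn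
        (fun t : ℝ => Emean μ
          (fun σ => spinC σ x * c x σ * (heatSG c t F (flipC σ x) - heatSG c t F σ)))
        (Set.Ioi 0) ∧
      covar μ F (fun σ => spinC σ x)
        = - ∫ t in Set.Ioi (0 : ℝ), Emean μ
            (fun σ => spinC σ x * c x σ * (heatSG c t F (flipC σ x) - heatSG c t F σ)) := by
  classical
  obtain ⟨L, hLpos, hgap⟩ := gap μ c hμpos hμ1 hcpos
  set EF : ℝ := Emean μ F with hEFdef
  set F0 : (V → Bool) → ℝ := fun σ => F σ - EF with hF0
  have hEF0 : Emean μ F0 = 0 := by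
    unfold Emean
    calc ∑ σ, μ σ * F0 σ = ∑ σ, (μ σ * F σ - EF * μ σ) :=
          Finset.sum_congr rfl fun σ _ => by rw [hF0]; ring
      _ = (∑ σ, μ σ * F σ) - EF * ∑ σ, μ σ := by
          rw [Finset.sum_sub_distrib, Finset.mul_sum]
      _ = 0 := by rw [hμ1, hEFdef]; unfold Emean; ring
  have hsplitF : ∀ (t : ℝ) σ, heatSG c t F σ = heatSG c t F0 σ + EF := by
    intro t σ
    have hF : F = F0 + (fun _ => EF) := by
      funext τ; rw [Pi.add_apply, hF0]; ring
    have h1 : heatSG c t F = heatSG c t F0 + heatSG c t (fun _ => EF) := by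
      rw [hF]; exact map_add _ _ _
    rw [h1, Pi.add_apply, heat_const c EF t]
  have hgrad : ∀ (t : ℝ) σ,
      heatSG c t F (flipC σ x) - heatSG c t F σ
        = heatSG c t F0 (flipC σ x) - heatSG c t F0 σ := by
    intro t σ; rw [hsplitF, hsplitF]; ring
  set f : ℝ → ℝ := fun t => Emean μ
    (fun σ => spinC σ x * c x σ * (heatSG c t F (flipC σ x) - heatSG c t F σ)) with hfdef
  set u : ℝ → ℝ := fun t => Emean μ (fun σ => spinC σ x * heatSG c t F σ) with hudef
  -- derivative of u is f
  have hu' : ∀ t : ℝ, HasDerivAt u (f t) t := by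
    intro t
    have h1 : HasDerivAt (fun s => ∑ σ, (μ σ * spinC σ x) * heatSG c s F σ)
        (∑ σ, (μ σ * spinC σ x) * gen c (heatSG c t F) σ) t :=
      HasDerivAt.fun_sum fun σ _ => (hasDerivAt_heat c F σ t).const_mul _
    have huf : u = fun s => ∑ σ, (μ σ * spinC σ x) * heatSG c s F σ := by
      funext s
      rw [hudef]; unfold Emean
      exact Finset.sum_congr rfl fun σ _ => by ring
    have hft : f t = ∑ σ, (μ σ * spinC σ x) * gen c (heatSG c t F) σ := by
      simp only [hfdef]
      rw [← key_id μ c hrev x (heatSG c t F)]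
      unfold Emean
      exact Finset.sum_congr rfl fun σ _ => by ring
    rw [huf, hft]
    exact h1
  -- mass conservation for F0 flow
  have hmean0 : ∀ t : ℝ, (∑ σ, μ σ * heatSG c t F0 σ) = 0 := by
    have hm' : ∀ t : ℝ, HasDerivAt (fun s => ∑ σ, μ σ * heatSG c s F0 σ) 0 t := by
      intro t
      have h1 : HasDerivAt (fun s => ∑ σ, μ σ * heatSG c s F0 σ)
          (∑ σ, μ σ * gen c (heatSG c t F0) σ) t :=
        HasDerivAt.fun_sum fun σ _ => (hasDerivAt_heat c F0 σ t).const_mul _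
      have h2 : (∑ σ, μ σ * gen c (heatSG c t F0) σ) = 0 := mass μ c hrev (heatSG c t F0)
      rwa [h2] at h1
    have hconst := is_const_of_deriv_eq_zero
      (fun t => (hm' t).differentiableAt) (fun t => (hm' t).deriv)
    intro t
    have h0 : (∑ σ, μ σ * heatSG c (0:ℝ) F0 σ) = 0 := by
      rw [heat_zero c F0]; exact hEF0
    rw [hconst t 0, h0]
  -- the squared norm φ and its decay
  set φ : ℝ → ℝ := fun s => ∑ σ, μ σ * (heatSG c s F0 σ * heatSG c s F0 σ) with hφdef
  have hφnonneg : ∀ t, 0 ≤ φ t := fun t =>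
    Finset.sum_nonneg fun σ _ => mul_nonneg (hμpos σ).le (mul_self_nonneg _)
  have hφ' : ∀ t : ℝ, HasDerivAt φ
      (∑ σ, μ σ * (gen c (heatSG c t F0) σ * heatSG c t F0 σ
        + heatSG c t F0 σ * gen c (heatSG c t F0) σ)) t := by
    intro t
    exact HasDerivAt.fun_sum fun σ _ =>
      (((hasDerivAt_heat c F0 σ t).mul (hasDerivAt_heat c F0 σ t)).const_mul (μ σ))
  have hD : ∀ t : ℝ, (∑ σ, μ σ * (gen c (heatSG c t F0) σ * heatSG c t F0 σ
        + heatSG c t F0 σ * gen c (heatSG c t F0) σ)) ≤ -(2*L) * φ t := by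
    intro t
    have h1 : (∑ σ, μ σ * (gen c (heatSG c t F0) σ * heatSG c t F0 σ
        + heatSG c t F0 σ * gen c (heatSG c t F0) σ))
        = 2 * Emean μ (fun σ => heatSG c t F0 σ * gen c (heatSG c t F0) σ) := by
      unfold Emean; rw [Finset.mul_sum]
      exact Finset.sum_congr rfl fun σ _ => by ring
    have h2 := dsym μ c hrev (heatSG c t F0)
    have h3 := hgap (heatSG c t F0) (hmean0 t)
    have h4 : Emean μ (fun σ => heatSG c t F0 σ * heatSG c t F0 σ) = φ t := rfl
    rw [h1, h2]
    rw [h4] at h3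
    linarith
  have hdecay : ∀ t : ℝ, 0 ≤ t → φ t ≤ φ 0 * Real.exp (-(2*L)*t) := by
    have hψ' : ∀ s : ℝ, HasDerivAt (fun r => φ r * Real.exp ((2*L)*r))
        ((∑ σ, μ σ * (gen c (heatSG c s F0) σ * heatSG c s F0 σ
          + heatSG c s F0 σ * gen c (heatSG c s F0) σ)) * Real.exp ((2*L)*s)
          + φ s * (Real.exp ((2*L)*s) * (2*L))) s := by
      intro s
      have hexp : HasDerivAt (fun r : ℝ => Real.exp ((2*L)*r))
          (Real.exp ((2*L)*s) * (2*L)) s := by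
        have h := ((hasDerivAt_id s).const_mul (2*L)).exp
        simpa using h
      exact (hφ' s).mul hexp
    have hψanti : Antitone (fun r => φ r * Real.exp ((2*L)*r)) := by
      apply antitone_of_deriv_nonpos
      · exact fun s => (hψ' s).differentiableAt
      · intro s
        rw [(hψ' s).deriv]
        have he := Real.exp_pos ((2*L)*s)
        nlinarith [hD s, hφnonneg s]
    intro t ht
    have h1 := hψanti ht
    simp only [mul_zero, Real.exp_zero, mul_one] at h1
    have hepos := Real.exp_pos ((2*L)*t)
    have hinv : Real.exp (-(2*L)*t) = (Real.exp ((2*L)*t))⁻¹ := by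
      rw [← Real.exp_neg]; ring_nf
    rw [hinv, ← div_eq_mul_inv, le_div_iff₀ hepos]
    exact h1
  -- minimum of μ
  obtain ⟨σ₀, -, hσ₀⟩ := Finset.exists_min_image Finset.univ μ Finset.univ_nonempty
  have hμm : 0 < μ σ₀ := hμpos σ₀
  have hμle1 : ∀ σ, μ σ ≤ 1 := by
    intro σ; rw [← hμ1]
    exact Finset.single_le_sum (fun τ _ => (hμpos τ).le) (Finset.mem_univ σ)
  -- L¹ bound by sqrt of φ
  have hA_nonneg : ∀ t : ℝ, 0 ≤ ∑ σ, μ σ * |heatSG c t F0 σ| := fun t =>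
    Finset.sum_nonneg fun σ _ => mul_nonneg (hμpos σ).le (abs_nonneg _)
  have hA_sq : ∀ t : ℝ, (∑ σ, μ σ * |heatSG c t F0 σ|) ≤ Real.sqrt (φ t) := by
    intro t
    have hcs := Finset.sum_mul_sq_le_sq_mul_sq Finset.univ
      (fun σ => Real.sqrt (μ σ)) (fun σ => Real.sqrt (μ σ) * |heatSG c t F0 σ|)
    have h1 : (∑ σ, Real.sqrt (μ σ) * (Real.sqrt (μ σ) * |heatSG c t F0 σ|))
        = ∑ σ, μ σ * |heatSG c t F0 σ| := by
      refine Finset.sum_congr rfl fun σ _ => ?_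
      rw [← mul_assoc, Real.mul_self_sqrt (hμpos σ).le]
    have h2 : (∑ σ, Real.sqrt (μ σ) ^ 2) = 1 := by
      rw [← hμ1]
      exact Finset.sum_congr rfl fun σ _ => Real.sq_sqrt (hμpos σ).le
    have h3 : (∑ σ, (Real.sqrt (μ σ) * |heatSG c t F0 σ|) ^ 2) = φ t := by
      rw [hφdef]
      refine Finset.sum_congr rfl fun σ _ => ?_
      rw [mul_pow, Real.sq_sqrt (hμpos σ).le, sq_abs]
      ring
    rw [h1, h2, h3, one_mul] at hcs
    rw [show (∑ σ, μ σ * |heatSG c t F0 σ|)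
        = Real.sqrt ((∑ σ, μ σ * |heatSG c t F0 σ|)^2) from
      (Real.sqrt_sq (hA_nonneg t)).symm]
    exact Real.sqrt_le_sqrt hcs
  have hAflip : ∀ t : ℝ, (∑ σ, μ σ * |heatSG c t F0 (flipC σ x)|)
      ≤ (μ σ₀)⁻¹ * ∑ σ, μ σ * |heatSG c t F0 σ| := by
    intro t
    have hre := sum_flip x (fun σ => μ (flipC σ x) * |heatSG c t F0 σ|)
    have hinvol : ∀ σ : V → Bool, flipC (flipC σ x) x = σ := fun σ => flipC_invol x σ
    simp only [hinvol] at hre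
    calc (∑ σ, μ σ * |heatSG c t F0 (flipC σ x)|)
        = ∑ σ, μ (flipC σ x) * |heatSG c t F0 σ| := hre
      _ ≤ ∑ σ, (μ σ₀)⁻¹ * (μ σ * |heatSG c t F0 σ|) := by
          refine Finset.sum_le_sum fun σ _ => ?_
          have h1 : μ (flipC σ x) ≤ (μ σ₀)⁻¹ * μ σ := by
            calc μ (flipC σ x) ≤ 1 := hμle1 _
              _ ≤ (μ σ₀)⁻¹ * μ σ := by
                  rw [le_inv_mul_iff₀ hμm, mul_one]
                  exact hσ₀ σ (Finset.mem_univ σ)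
          calc μ (flipC σ x) * |heatSG c t F0 σ|
              ≤ ((μ σ₀)⁻¹ * μ σ) * |heatSG c t F0 σ| :=
                mul_le_mul_of_nonneg_right h1 (abs_nonneg _)
            _ = (μ σ₀)⁻¹ * (μ σ * |heatSG c t F0 σ|) := by ring
      _ = (μ σ₀)⁻¹ * ∑ σ, μ σ * |heatSG c t F0 σ| := by rw [Finset.mul_sum]
  have hcM0 : (0:ℝ) < cM := lt_of_lt_of_le hcm ((hbd x (fun _ => true)).1.trans (hbd x _).2)
  set K : ℝ := cM * (((μ σ₀)⁻¹ + 1) * Real.sqrt (φ 0)) with hKdef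
  have hsqrt_decay : ∀ t : ℝ, 0 ≤ t →
      Real.sqrt (φ t) ≤ Real.sqrt (φ 0) * Real.exp (-(L*t)) := by
    intro t ht
    have h1 := hdecay t ht
    have h2 : Real.exp (-(2*L)*t) = (Real.exp (-(L*t)))^2 := by
      rw [sq, ← Real.exp_add]; ring_nf
    calc Real.sqrt (φ t) ≤ Real.sqrt (φ 0 * Real.exp (-(2*L)*t)) := Real.sqrt_le_sqrt h1
      _ = Real.sqrt (φ 0) * Real.sqrt (Real.exp (-(2*L)*t)) :=
          Real.sqrt_mul (hφnonneg 0) _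
      _ = Real.sqrt (φ 0) * Real.exp (-(L*t)) := by
          rw [h2, Real.sqrt_sq (Real.exp_pos _).le]
  have hfbound : ∀ t : ℝ, 0 ≤ t → |f t| ≤ K * Real.exp (-(L*t)) := by
    intro t ht
    have hterm : ∀ σ : V → Bool,
        |μ σ * (spinC σ x * c x σ * (heatSG c t F (flipC σ x) - heatSG c t F σ))|
          ≤ cM * (μ σ * |heatSG c t F0 (flipC σ x)| + μ σ * |heatSG c t F0 σ|) := by
      intro σ
      have he : |μ σ * (spinC σ x * c x σ * (heatSG c t F (flipC σ x) - heatSG c t F σ))|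
          = μ σ * c x σ * |heatSG c t F0 (flipC σ x) - heatSG c t F0 σ| := by
        rw [hgrad t σ, abs_mul, abs_mul, abs_mul, abs_spin, abs_of_pos (hμpos σ),
          abs_of_pos (hcpos x σ)]
        ring
      rw [he]
      have hd : |heatSG c t F0 (flipC σ x) - heatSG c t F0 σ|
          ≤ |heatSG c t F0 (flipC σ x)| + |heatSG c t F0 σ| := abs_sub _ _
      have hcle := (hbd x σ).2
      have h5 : μ σ * c x σ * |heatSG c t F0 (flipC σ x) - heatSG c t F0 σ|
          ≤ (μ σ * cM) * (|heatSG c t F0 (flipC σ x)| + |heatSG c t F0 σ|) := by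
        apply mul_le_mul (mul_le_mul_of_nonneg_left hcle (hμpos σ).le) hd (abs_nonneg _)
          (mul_nonneg (hμpos σ).le hcM0.le)
      calc μ σ * c x σ * |heatSG c t F0 (flipC σ x) - heatSG c t F0 σ|
          ≤ (μ σ * cM) * (|heatSG c t F0 (flipC σ x)| + |heatSG c t F0 σ|) := h5
        _ = cM * (μ σ * |heatSG c t F0 (flipC σ x)| + μ σ * |heatSG c t F0 σ|) := by ring
    have hstep1 : |f t| ≤ cM * ((∑ σ, μ σ * |heatSG c t F0 (flipC σ x)|)
        + ∑ σ, μ σ * |heatSG c t F0 σ|) := by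
      have habs : |f t| ≤ ∑ σ, |μ σ * (spinC σ x * c x σ
          * (heatSG c t F (flipC σ x) - heatSG c t F σ))| := by
        rw [hfdef]
        exact Finset.abs_sum_le_sum_abs _ _
      have hsum : ∑ σ, |μ σ * (spinC σ x * c x σ
            * (heatSG c t F (flipC σ x) - heatSG c t F σ))|
          ≤ ∑ σ, cM * (μ σ * |heatSG c t F0 (flipC σ x)| + μ σ * |heatSG c t F0 σ|) :=
        Finset.sum_le_sum fun σ _ => hterm σ
      have heq : ∑ σ, cM * (μ σ * |heatSG c t F0 (flipC σ x)| + μ σ * |heatSG c t F0 σ|)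
          = cM * ((∑ σ, μ σ * |heatSG c t F0 (flipC σ x)|)
            + ∑ σ, μ σ * |heatSG c t F0 σ|) := by
        rw [← Finset.mul_sum, Finset.sum_add_distrib]
      linarith
    have hstep2 : cM * ((∑ σ, μ σ * |heatSG c t F0 (flipC σ x)|)
          + ∑ σ, μ σ * |heatSG c t F0 σ|)
        ≤ cM * (((μ σ₀)⁻¹ + 1) * Real.sqrt (φ t)) := by
      apply mul_le_mul_of_nonneg_left _ hcM0.le
      have h1 := hAflip t
      have h2 := hA_sq t
      have h3 : (μ σ₀)⁻¹ * (∑ σ, μ σ * |heatSG c t F0 σ|)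
          ≤ (μ σ₀)⁻¹ * Real.sqrt (φ t) :=
        mul_le_mul_of_nonneg_left h2 (inv_pos.mpr hμm).le
      nlinarith
    have hstep3 : cM * (((μ σ₀)⁻¹ + 1) * Real.sqrt (φ t)) ≤ K * Real.exp (-(L*t)) := by
      rw [hKdef]
      have h1 := hsqrt_decay t ht
      have hpos : (0:ℝ) ≤ (μ σ₀)⁻¹ + 1 := by positivity
      calc cM * (((μ σ₀)⁻¹ + 1) * Real.sqrt (φ t))
          ≤ cM * (((μ σ₀)⁻¹ + 1) * (Real.sqrt (φ 0) * Real.exp (-(L*t)))) := by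
            apply mul_le_mul_of_nonneg_left _ hcM0.le
            exact mul_le_mul_of_nonneg_left h1 hpos
        _ = cM * (((μ σ₀)⁻¹ + 1) * Real.sqrt (φ 0)) * Real.exp (-(L*t)) := by ring
    linarith
  -- continuity of the integrand
  have hfcont : Continuous f := by
    rw [hfdef]
    unfold Emean
    apply continuous_finset_sum
    intro σ _
    have h1 : Continuous fun t : ℝ => heatSG c t F (flipC σ x) :=
      continuous_iff_continuousAt.mpr fun t => (hasDerivAt_heat c F (flipC σ x) t).continuousAt
    have h2 : Continuous fun t : ℝ => heatSG c t F σ :=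
      continuous_iff_continuousAt.mpr fun t => (hasDerivAt_heat c F σ t).continuousAt
    exact continuous_const.mul (continuous_const.mul (h1.sub h2))
  -- integrability
  have hint : MeasureTheory.IntegrableOn f (Set.Ioi 0) := by
    have hg : MeasureTheory.IntegrableOn (fun t => Real.exp (-L * t)) (Set.Ioi (0:ℝ)) :=
      exp_neg_integrableOn_Ioi 0 hLpos
    have hg2 : MeasureTheory.IntegrableOn (fun t => K * Real.exp (-L * t)) (Set.Ioi (0:ℝ)) :=
      hg.const_mul K
    apply MeasureTheory.Integrable.mono' hg2 (hfcont.aestronglyMeasurable.restrict)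
    rw [MeasureTheory.ae_restrict_iff' measurableSet_Ioi]
    apply MeasureTheory.ae_of_all
    intro t ht
    rw [Real.norm_eq_abs, neg_mul]
    exact hfbound t (le_of_lt ht)
  -- limit of u at infinity
  set Espin : ℝ := Emean μ (fun σ => spinC σ x) with hEspindef
  have hudiff : ∀ t : ℝ, u t - EF * Espin = ∑ σ, μ σ * (spinC σ x * heatSG c t F0 σ) := by
    intro t
    have h1 : u t = (∑ σ, μ σ * (spinC σ x * heatSG c t F0 σ)) + EF * Espin := by
      simp only [hudef, hEspindef]; unfold Emean
      rw [Finset.mul_sum, ← Finset.sum_add_distrib]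
      refine Finset.sum_congr rfl fun σ _ => ?_
      beta_reduce
      rw [hsplitF t σ]; ring
    rw [h1]; ring
  have hulim : Filter.Tendsto u Filter.atTop (nhds (EF * Espin)) := by
    have hbnd : ∀ t : ℝ, 0 ≤ t →
        ‖u t - EF * Espin‖ ≤ Real.sqrt (φ 0) * Real.exp (-(L*t)) := by
      intro t ht
      rw [Real.norm_eq_abs, hudiff t]
      have habs : |∑ σ, μ σ * (spinC σ x * heatSG c t F0 σ)|
          ≤ ∑ σ, μ σ * |heatSG c t F0 σ| := by
        calc |∑ σ, μ σ * (spinC σ x * heatSG c t F0 σ)|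
            ≤ ∑ σ, |μ σ * (spinC σ x * heatSG c t F0 σ)| := Finset.abs_sum_le_sum_abs _ _
          _ = ∑ σ, μ σ * |heatSG c t F0 σ| := by
              refine Finset.sum_congr rfl fun σ _ => ?_
              rw [abs_mul, abs_mul, abs_spin, abs_of_pos (hμpos σ), one_mul]
      calc |∑ σ, μ σ * (spinC σ x * heatSG c t F0 σ)|
          ≤ ∑ σ, μ σ * |heatSG c t F0 σ| := habs
        _ ≤ Real.sqrt (φ t) := hA_sq t
        _ ≤ Real.sqrt (φ 0) * Real.exp (-(L*t)) := hsqrt_decay t ht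
    have hexp0 : Filter.Tendsto (fun t : ℝ => Real.sqrt (φ 0) * Real.exp (-(L*t)))
        Filter.atTop (nhds 0) := by
      have h1 : Filter.Tendsto (fun t : ℝ => Real.exp (-(L*t))) Filter.atTop (nhds 0) := by
        have h2 : Filter.Tendsto (fun t : ℝ => L * t) Filter.atTop Filter.atTop :=
          Filter.Tendsto.const_mul_atTop hLpos Filter.tendsto_id
        exact Real.tendsto_exp_neg_atTop_nhds_zero.comp h2
      have := h1.const_mul (Real.sqrt (φ 0))
      simpa using this
    have hzero : Filter.Tendsto (fun t => u t - EF * Espin) Filter.atTop (nhds 0) := by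
      apply squeeze_zero_norm' _ hexp0
      filter_upwards [Filter.eventually_ge_atTop (0:ℝ)] with t ht
      exact hbnd t ht
    have := hzero.add_const (EF * Espin)
    simpa using this
  -- FTC on [0, ∞)
  have hu0cont : ContinuousWithinAt u (Set.Ici 0) 0 :=
    (hu' 0).continuousAt.continuousWithinAt
  have hFTC := MeasureTheory.integral_Ioi_of_hasDerivAt_of_tendsto
    hu0cont (fun t _ => hu' t) hint hulim
  have hu0 : u 0 = Emean μ (fun σ => F σ * spinC σ x) := by
    simp only [hudef]
    have h0 : heatSG c (0:ℝ) F = F := heat_zero c F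
    unfold Emean
    rw [h0]
    exact Finset.sum_congr rfl fun σ _ => by ring
  constructor
  · exact hint
  · rw [hFTC]
    have hcov : covar μ F (fun σ => spinC σ x)
        = Emean μ (fun σ => F σ * spinC σ x) - EF * Espin := by
      rw [covar, hEFdef, hEspindef]
    rw [hcov, ← hu0]
    ring
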